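/- Let E be a finite set and let v ∈ ℕ be such that 64e³·v ≤ #E, and let L(E,v) denote the collection of all subsets of E of cardinality v. Then there is a subcollection L(E,v,1/2) ⊆ L(E,v) with the following properties: (i) for any two distinct E₁, E₂ ∈ L(E,v,1/2) one has #(E₁ ∩ E₂) ≤ v/2; (ii) (#L(E,v,1/2))⁴ ≥ #L(E,v) = C(#E, v), where C(·,·) denotes the binomial coefficient. -/

import Mathlib

open Finset

section Helpers

open Finset

-- v^v ≤ e^v * v!
lemma pow_self_le_exp_mul_factorial : ∀ v : ℕ, (v : ℝ) ^ v ≤ Real.exp 1 ^ v * v.factorial := by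
  intro v
  induction v with
  | zero => simp
  | succ n ih =>
    rcases Nat.eq_zero_or_pos n with hn | hn
    · subst hn; simpa using Real.add_one_le_exp (1:ℝ) |>.trans_eq (by ring_nf; norm_num)
    · have hnp : (0:ℝ) < n := by exact_mod_cast hn
      have key : ((n:ℝ)+1) ^ n ≤ Real.exp 1 * (n:ℝ) ^ n := by
        have h1 : ((n:ℝ)+1) ^ n = ((1 + 1/(n:ℝ)) * n) ^ n := by
          field_simp
        have h2 : (1 + 1/(n:ℝ)) ^ n ≤ Real.exp 1 := by
          have := Real.add_one_le_exp (1/(n:ℝ))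
          calc (1 + 1/(n:ℝ)) ^ n ≤ (Real.exp (1/(n:ℝ))) ^ n := by
                apply pow_le_pow_left₀ (by positivity) (by linarith)
            _ = Real.exp 1 := by
                rw [← Real.exp_nat_mul]
                congr 1
                field_simp
        calc ((n:ℝ)+1) ^ n = (1 + 1/(n:ℝ)) ^ n * (n:ℝ) ^ n := by rw [h1, mul_pow]
          _ ≤ Real.exp 1 * (n:ℝ) ^ n := by
              apply mul_le_mul_of_nonneg_right h2 (by positivity)
      have : ((n:ℝ)+1) ^ (n+1) ≤ Real.exp 1 ^ (n+1) * (n+1).factorial := by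
        have hfac : ((n+1).factorial : ℝ) = ((n:ℝ)+1) * n.factorial := by
          push_cast [Nat.factorial_succ]; ring
        calc ((n:ℝ)+1) ^ (n+1) = ((n:ℝ)+1) * ((n:ℝ)+1) ^ n := by ring
          _ ≤ ((n:ℝ)+1) * (Real.exp 1 * (n:ℝ)^n) :=
              mul_le_mul_of_nonneg_left key (by positivity)
          _ ≤ ((n:ℝ)+1) * (Real.exp 1 * (Real.exp 1 ^ n * n.factorial)) := by
              apply mul_le_mul_of_nonneg_left _ (by positivity)
              exact mul_le_mul_of_nonneg_left ih (Real.exp_pos 1).le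
          _ = Real.exp 1 ^ (n+1) * ((n+1).factorial) := by rw [hfac]; ring
      exact_mod_cast this

lemma choose_le_two_pow' (n k : ℕ) : n.choose k ≤ 2 ^ n := by
  rcases le_or_gt k n with hk | hk
  · calc n.choose k ≤ ∑ m ∈ Finset.range (n+1), n.choose m :=
        Finset.single_le_sum (fun _ _ => Nat.zero_le _) (Finset.mem_range.mpr (Nat.lt_succ_of_le hk))
      _ = 2 ^ n := Nat.sum_range_choose n
  · rw [Nat.choose_eq_zero_of_lt hk]; positivity

open Finset

-- Hamming-ball bound: number of g agreeing with f in ≥ t coords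
lemma ball_card_le (v m t : ℕ) (ht : t ≤ v) (f : Fin v → Fin m) :
    ((Finset.univ : Finset (Fin v → Fin m)).filter
      (fun g => t ≤ (Finset.univ.filter fun i => f i = g i).card)).card
    ≤ v.choose t * m ^ (v - t) := by
  classical
  set B := ((Finset.univ : Finset (Fin v → Fin m)).filter
      (fun g => t ≤ (Finset.univ.filter fun i => f i = g i).card)) with hB
  have hsub : B ⊆ ((Finset.univ : Finset (Fin v)).powersetCard t).biUnion
      (fun S => (Finset.univ : Finset (Fin v → Fin m)).filter (fun g => ∀ i ∈ S, f i = g i)) := by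
    intro g hg
    rw [hB, mem_filter] at hg
    obtain ⟨S, hS, hScard⟩ := Finset.exists_subset_card_eq hg.2
    rw [mem_biUnion]
    refine ⟨S, ?_, ?_⟩
    · rw [mem_powersetCard]; exact ⟨Finset.subset_univ _, hScard⟩
    · rw [mem_filter]
      exact ⟨mem_univ _, fun i hi => (Finset.mem_filter.mp (hS hi)).2⟩
  have hcard : ∀ S ∈ ((Finset.univ : Finset (Fin v)).powersetCard t),
      ((Finset.univ : Finset (Fin v → Fin m)).filter (fun g => ∀ i ∈ S, f i = g i)).card
        ≤ m ^ (v - t) := by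
    intro S hS
    rw [mem_powersetCard] at hS
    have hScard := hS.2
    -- inject into functions on the complement
    have : ((Finset.univ : Finset (Fin v → Fin m)).filter (fun g => ∀ i ∈ S, f i = g i)).card
        ≤ (Finset.univ : Finset ((↥((Finset.univ : Finset (Fin v)) \ S)) → Fin m)).card := by
      apply Finset.card_le_card_of_injOn (fun g => fun i => g i.1)
      · intro g _; exact mem_univ _
      · intro g₁ hg₁ g₂ hg₂ hres
        rw [mem_coe, mem_filter] at hg₁ hg₂
        funext i
        by_cases hi : i ∈ S
        · rw [← hg₁.2 i hi, ← hg₂.2 i hi]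
        · have hi' : i ∈ (Finset.univ : Finset (Fin v)) \ S := by
            rw [mem_sdiff]; exact ⟨mem_univ _, hi⟩
          exact congrFun hres ⟨i, hi'⟩
    refine this.trans ?_
    rw [Finset.card_univ, Fintype.card_fun]
    simp only [Fintype.card_fin, Fintype.card_coe]
    rw [Finset.card_sdiff_of_subset hS.1, Finset.card_univ, Fintype.card_fin, hScard]
  calc B.card ≤ _ := Finset.card_le_card hsub
    _ ≤ ∑ S ∈ (Finset.univ : Finset (Fin v)).powersetCard t,
        ((Finset.univ : Finset (Fin v → Fin m)).filter (fun g => ∀ i ∈ S, f i = g i)).card :=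
      Finset.card_biUnion_le
    _ ≤ ∑ S ∈ (Finset.univ : Finset (Fin v)).powersetCard t, m ^ (v - t) :=
      Finset.sum_le_sum hcard
    _ = v.choose t * m ^ (v - t) := by
      rw [Finset.sum_const, smul_eq_mul, Finset.card_powersetCard, Finset.card_univ,
        Fintype.card_fin]

-- existence of a large code with small pairwise agreement
lemma exists_code (v m : ℕ) (hv : 1 ≤ v) (hm : 1 ≤ m) :
    ∃ F : Finset (Fin v → Fin m),
      (∀ f ∈ F, ∀ g ∈ F, f ≠ g →
        (Finset.univ.filter fun i => f i = g i).card ≤ v / 2) ∧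
      m ^ (v / 2 + 1) ≤ F.card * v.choose (v / 2 + 1) := by
  classical
  set t := v / 2 + 1 with htdef
  have ht : t ≤ v := by
    have := Nat.div_lt_self hv (by norm_num : 1 < 2)
    omega
  set P : Finset (Fin v → Fin m) → Prop := fun F =>
    ∀ f ∈ F, ∀ g ∈ F, f ≠ g → (Finset.univ.filter fun i => f i = g i).card ≤ v / 2 with hP
  have hPempty : P ∅ := by intro f hf; simp at hf
  -- pick F of max cardinality with P
  obtain ⟨F, hFmem, hFmax⟩ := Finset.exists_max_image
    ((Finset.univ : Finset (Finset (Fin v → Fin m))).filter P) Finset.card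
    ⟨∅, mem_filter.mpr ⟨mem_univ _, hPempty⟩⟩
  rw [mem_filter] at hFmem
  have hPF : P F := hFmem.2
  refine ⟨F, hPF, ?_⟩
  -- maximality: every g is in some ball around F
  have hcover : (Finset.univ : Finset (Fin v → Fin m)) ⊆ F.biUnion
      (fun f => (Finset.univ : Finset (Fin v → Fin m)).filter
        (fun g => t ≤ (Finset.univ.filter fun i => f i = g i).card)) := by
    intro g _
    rw [mem_biUnion]
    by_cases hg : g ∈ F
    · refine ⟨g, hg, ?_⟩
      rw [mem_filter]
      refine ⟨mem_univ _, ?_⟩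
      have hgg : (Finset.univ.filter fun i => g i = g i).card = v := by simp
      omega
    · -- insert g F violates P
      have hins : ¬ P (insert g F) := by
        intro hcon
        have : (insert g F).card ≤ F.card :=
          hFmax _ (mem_filter.mpr ⟨mem_univ _, hcon⟩)
        rw [Finset.card_insert_of_notMem hg] at this
        omega
      replace hins : ¬ ∀ f ∈ insert g F, ∀ g' ∈ insert g F, f ≠ g' →
          (Finset.univ.filter fun i => f i = g' i).card ≤ v / 2 := hins
      push_neg at hins
      obtain ⟨f₁, hf₁, f₂, hf₂, hne, hagree⟩ := hins
      rw [Finset.mem_insert] at hf₁ hf₂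
      -- one of f₁ f₂ is g, the other in F
      rcases hf₁ with rfl | hf₁
      · rcases hf₂ with rfl | hf₂
        · exact absurd rfl hne
        · refine ⟨f₂, hf₂, ?_⟩
          rw [mem_filter]
          refine ⟨mem_univ _, ?_⟩
          have : (Finset.univ.filter fun i => f₂ i = f₁ i).card
              = (Finset.univ.filter fun i => f₁ i = f₂ i).card := by
            congr 1; ext i; simp [eq_comm]
          omega
      · rcases hf₂ with rfl | hf₂
        · exact ⟨f₁, hf₁, mem_filter.mpr ⟨mem_univ _, by omega⟩⟩
        · exact absurd (hPF f₁ hf₁ f₂ hf₂ hne) (by omega)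
  have hcount : m ^ v ≤ F.card * (v.choose t * m ^ (v - t)) := by
    calc m ^ v = (Finset.univ : Finset (Fin v → Fin m)).card := by
          rw [Finset.card_univ, Fintype.card_fun]; simp
      _ ≤ _ := Finset.card_le_card hcover
      _ ≤ ∑ f ∈ F, ((Finset.univ : Finset (Fin v → Fin m)).filter
            (fun g => t ≤ (Finset.univ.filter fun i => f i = g i).card)).card :=
          Finset.card_biUnion_le
      _ ≤ ∑ _f ∈ F, v.choose t * m ^ (v - t) :=
          Finset.sum_le_sum (fun f _ => ball_card_le v m t ht f)
      _ = F.card * (v.choose t * m ^ (v - t)) := by rw [Finset.sum_const, smul_eq_mul]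
  have hsplit : m ^ v = m ^ t * m ^ (v - t) := by
    rw [← pow_add]; congr 1; omega
  have hmpos : 0 < m ^ (v - t) := Nat.pow_pos hm
  have : m ^ t * m ^ (v - t) ≤ F.card * v.choose t * m ^ (v - t) := by
    rw [← hsplit, mul_assoc]; exact hcount
  exact Nat.le_of_mul_le_mul_right this hmpos
end Helpers

/-- Lemma 2.6: if `64e³v ≤ #E` then among the `v`-element subsets of `E` there is a
subfamily `L` such that any two distinct members of `L` intersect in at most `v/2`
elements and `(#L)⁴ ≥ C(#E, v)`. -/
theorem exists_wellSeparated_family {α : Type*} [DecidableEq α] (E : Finset α) (v : ℕ)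
    (h : 64 * Real.exp 3 * v ≤ (E.card : ℝ)) :
    ∃ L : Finset (Finset α), L ⊆ E.powersetCard v ∧
      (∀ E₁ ∈ L, ∀ E₂ ∈ L, E₁ ≠ E₂ → ((E₁ ∩ E₂).card : ℝ) ≤ (v : ℝ) / 2) ∧
      ((E.powersetCard v).card : ℝ) ≤ ((L.card : ℝ)) ^ 4 ∧
      (E.powersetCard v).card = E.card.choose v := by
  classical
  have hpow : (E.powersetCard v).card = E.card.choose v := Finset.card_powersetCard v E
  rcases Nat.eq_zero_or_pos v with hv0 | hv
  · -- v = 0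
    subst hv0
    refine ⟨{∅}, ?_, ?_, ?_, hpow⟩
    · intro s hs
      rw [Finset.mem_singleton] at hs
      subst hs
      rw [Finset.mem_powersetCard]
      exact ⟨Finset.empty_subset _, Finset.card_empty⟩
    · intro E₁ h₁ E₂ h₂ hne
      rw [Finset.mem_singleton] at h₁ h₂
      exact absurd (h₁.trans h₂.symm) hne
    · rw [hpow]
      simp
  · -- v ≥ 1
    set n := E.card with hn
    set m := n / v with hm
    have he1 : (1:ℝ) ≤ Real.exp 1 := by linarith [Real.add_one_le_exp (0:ℝ), Real.exp_lt_exp.mpr (show (0:ℝ) < 1 by norm_num)]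
    have he4 : (4:ℝ) ≤ Real.exp 3 := by linarith [Real.add_one_le_exp (3:ℝ)]
    have hvR : (1:ℝ) ≤ (v:ℝ) := by exact_mod_cast hv
    -- n < (m+1) * v  and m*v ≤ n
    have hmv : m * v ≤ n := Nat.div_mul_le_self n v
    have hnlt : n < (m + 1) * v := by
      have h1 : n % v + v * m = n := Nat.mod_add_div n v
      have h2 : n % v < v := Nat.mod_lt n hv
      calc n = n % v + v * m := h1.symm
        _ < v + v * m := Nat.add_lt_add_right h2 _
        _ = (m + 1) * v := by ring
    -- m is large: 87 ≤ m
    have hm87 : 87 ≤ m := by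
      by_contra hcon
      push_neg at hcon
      have h1 : (n:ℝ) < ((m:ℝ) + 1) * v := by exact_mod_cast hnlt
      have h2 : (m:ℝ) < 87 := by exact_mod_cast hcon
      have h3 : 64 * Real.exp 3 * v ≤ (n:ℝ) := h
      nlinarith [Real.exp_pos 3, mul_pos (show (0:ℝ) < 64 * Real.exp 3 by positivity) (show (0:ℝ) < v by linarith)]
    have hm1 : 1 ≤ m := by omega
    -- embedding of Fin v × Fin m into E
    have hcard_le : Fintype.card (Fin v × Fin m) ≤ Fintype.card ↥E := by
      rw [Fintype.card_prod, Fintype.card_fin, Fintype.card_fin, Fintype.card_coe]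
      calc v * m = m * v := Nat.mul_comm v m
        _ ≤ n := hmv
    obtain ⟨ι⟩ := Function.Embedding.nonempty_of_card_le hcard_le
    -- the map from codewords to subsets
    set A : (Fin v → Fin m) → Finset α :=
      fun f => Finset.univ.image (fun i => (ι (i, f i) : α)) with hA
    have hinj : ∀ f : Fin v → Fin m, Function.Injective (fun i => (ι (i, f i) : α)) := by
      intro f i j hij
      have := ι.injective (Subtype.coe_injective hij)
      exact (Prod.mk.injEq _ _ _ _ ▸ this).1
    have hAcard : ∀ f, (A f).card = v := by
      intro f
      rw [hA, Finset.card_image_of_injective _ (hinj f), Finset.card_univ, Fintype.card_fin]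
    have hAsub : ∀ f, A f ⊆ E := by
      intro f x hx
      rw [hA, Finset.mem_image] at hx
      obtain ⟨i, _, rfl⟩ := hx
      exact (ι (i, f i)).2
    have hAmem : ∀ f, A f ∈ E.powersetCard v := by
      intro f
      rw [Finset.mem_powersetCard]
      exact ⟨hAsub f, hAcard f⟩
    -- intersection of images
    have hAint : ∀ f g : Fin v → Fin m,
        (A f ∩ A g).card = (Finset.univ.filter fun i => f i = g i).card := by
      intro f g
      have heq : A f ∩ A g =
          (Finset.univ.filter fun i => f i = g i).image (fun i => (ι (i, f i) : α)) := by
        ext x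
        simp only [Finset.mem_inter, hA, Finset.mem_image]
        constructor
        · rintro ⟨hxf, hxg⟩
          obtain ⟨i, _, rfl⟩ := hxf
          obtain ⟨j, _, hji⟩ := hxg
          have hprod := ι.injective (Subtype.coe_injective hji)
          have hji' : j = i := (Prod.mk.injEq _ _ _ _ ▸ hprod).1
          subst hji'
          have hfg : f j = g j := ((Prod.mk.injEq _ _ _ _ ▸ hprod).2).symm
          exact ⟨j, Finset.mem_filter.mpr ⟨mem_univ _, hfg⟩, rfl⟩
        · rintro ⟨i, hi, rfl⟩
          rw [Finset.mem_filter] at hi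
          exact ⟨⟨i, mem_univ _, rfl⟩, ⟨i, mem_univ _, by rw [hi.2]⟩⟩
      rw [heq, Finset.card_image_of_injective _ (hinj f)]
    -- A is injective
    have hAinj : Function.Injective A := by
      intro f g hfg
      funext i
      by_contra hne
      have hx : (ι (i, f i) : α) ∈ A g := by
        rw [← hfg]
        exact Finset.mem_image_of_mem _ (mem_univ i)
      simp only [hA, Finset.mem_image] at hx
      obtain ⟨j, _, hji⟩ := hx
      have hprod := ι.injective (Subtype.coe_injective hji)
      have : j = i ∧ g j = f i := by
        constructor
        · exact (Prod.mk.injEq _ _ _ _ ▸ hprod).1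
        · exact (Prod.mk.injEq _ _ _ _ ▸ hprod).2
      exact hne (this.1 ▸ this.2).symm
    -- get the code
    obtain ⟨F, hFsep, hFcard⟩ := exists_code v m hv hm1
    refine ⟨F.image A, ?_, ?_, ?_, hpow⟩
    · intro s hs
      rw [Finset.mem_image] at hs
      obtain ⟨f, _, rfl⟩ := hs
      exact hAmem f
    · intro E₁ h₁ E₂ h₂ hne
      rw [Finset.mem_image] at h₁ h₂
      obtain ⟨f, hf, rfl⟩ := h₁
      obtain ⟨g, hg, rfl⟩ := h₂
      have hfg : f ≠ g := fun hc => hne (by rw [hc])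
      have := hFsep f hf g hg hfg
      rw [hAint f g]
      have h2 : ((Finset.univ.filter fun i => f i = g i).card : ℝ) ≤ ((v / 2 : ℕ) : ℝ) := by
        exact_mod_cast this
      have h3 : ((v / 2 : ℕ) : ℝ) ≤ (v : ℝ) / 2 := by
        rw [le_div_iff₀ (by norm_num : (0:ℝ) < 2)]
        exact_mod_cast Nat.div_mul_le_self v 2
      linarith
    · -- the main counting estimate
      rw [Finset.card_image_of_injective _ hAinj, hpow]
      set t := v / 2 + 1 with htdef
      set K := (F.card : ℝ) with hK
      set M := (m : ℝ) with hM
      have hM87 : (87:ℝ) ≤ M := by rw [hM]; exact_mod_cast hm87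
      have hM1 : (1:ℝ) ≤ M := by linarith
      have hKpos : (0:ℝ) < K := by
        have hmt : 0 < m ^ t := Nat.pow_pos hm1
        have hprod : 0 < F.card * v.choose t := lt_of_lt_of_le hmt hFcard
        have hFpos : 0 < F.card := Nat.pos_of_ne_zero (fun h0 => by simp [h0] at hprod)
        rw [hK]; exact_mod_cast hFpos
      -- step 1: M^t / 2^v ≤ K
      have hstep1 : M ^ t / 2 ^ v ≤ K := by
        rw [div_le_iff₀ (by positivity)]
        have hc2 : (v.choose t : ℝ) ≤ 2 ^ v := by exact_mod_cast choose_le_two_pow' v t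
        have h1 : M ^ t ≤ K * (v.choose t : ℝ) := by rw [hK, hM]; exact_mod_cast hFcard
        calc M ^ t ≤ K * (v.choose t : ℝ) := h1
          _ ≤ K * 2 ^ v := by apply mul_le_mul_of_nonneg_left hc2 hKpos.le
      -- step 2: choose n v ≤ (e * n / v)^v
      have hstep2 : (n.choose v : ℝ) ≤ (Real.exp 1 * n / v) ^ v := by
        have h1 : (n.choose v : ℝ) ≤ (n:ℝ) ^ v / v.factorial := Nat.choose_le_pow_div v n
        have h2 : (v:ℝ) ^ v ≤ Real.exp 1 ^ v * v.factorial := pow_self_le_exp_mul_factorial v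
        have hfac : (0:ℝ) < v.factorial := by exact_mod_cast v.factorial_pos
        have hvpos : (0:ℝ) < v := by linarith
        rw [le_div_iff₀ hfac] at h1
        have hexpand : (Real.exp 1 * n / v) ^ v = Real.exp 1 ^ v * (n:ℝ)^v / (v:ℝ)^v := by
          rw [div_pow, mul_pow]
        rw [hexpand, le_div_iff₀ (by positivity)]
        calc (n.choose v : ℝ) * (v:ℝ)^v ≤ (n.choose v : ℝ) * (Real.exp 1 ^ v * v.factorial) := by
              apply mul_le_mul_of_nonneg_left h2 (by positivity)
          _ = (n.choose v : ℝ) * v.factorial * Real.exp 1 ^ v := by ring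
          _ ≤ (n:ℝ)^v * Real.exp 1 ^ v := by
              apply mul_le_mul_of_nonneg_right h1 (by positivity)
          _ = Real.exp 1 ^ v * (n:ℝ)^v := by ring
      -- step 3: e * n / v ≤ 2 e M
      have hstep3 : Real.exp 1 * n / v ≤ 2 * Real.exp 1 * M := by
        have h1 : (n:ℝ) < ((m:ℝ) + 1) * v := by exact_mod_cast hnlt
        have hvpos : (0:ℝ) < v := by linarith
        rw [div_le_iff₀ hvpos]
        have hMlarge : (m:ℝ) + 1 ≤ 2 * M := by rw [hM] at hM1 ⊢; linarith
        calc Real.exp 1 * n ≤ Real.exp 1 * (((m:ℝ) + 1) * v) := by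
              apply mul_le_mul_of_nonneg_left h1.le (Real.exp_pos 1).le
          _ ≤ Real.exp 1 * ((2 * M) * v) := by
              apply mul_le_mul_of_nonneg_left _ (Real.exp_pos 1).le
              apply mul_le_mul_of_nonneg_right hMlarge hvpos.le
          _ = 2 * Real.exp 1 * M * v := by ring
      -- step 4: (2eM)^v ≤ (M^t / 2^v)^4
      have hstep4 : (2 * Real.exp 1 * M) ^ v ≤ (M ^ t / 2 ^ v) ^ 4 := by
        have he3 : Real.exp 1 ≤ 2.7182818286 := le_of_lt Real.exp_one_lt_d9
        have h32e : 32 * Real.exp 1 ≤ M := by linarith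
        have h16 : ((16:ℝ)) ^ v = ((2:ℝ) ^ v) ^ 4 := by
          rw [show (16:ℝ) = 2 ^ 4 by norm_num, ← pow_mul, ← pow_mul, Nat.mul_comm]
        rw [div_pow, le_div_iff₀ (by positivity : (0:ℝ) < ((2:ℝ) ^ v) ^ 4), ← h16, ← pow_mul]
        have key : (32 * Real.exp 1) ^ v ≤ M ^ v :=
          pow_le_pow_left₀ (by positivity) h32e v
        calc (2 * Real.exp 1 * M) ^ v * 16 ^ v = (32 * Real.exp 1) ^ v * M ^ v := by
              rw [← mul_pow, ← mul_pow]; congr 1; ring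
          _ ≤ M ^ v * M ^ v := mul_le_mul_of_nonneg_right key (by positivity)
          _ = M ^ (2 * v) := by rw [← pow_add, two_mul]
          _ ≤ M ^ (t * 4) := pow_le_pow_right₀ hM1 (by omega)
      -- combine
      calc (n.choose v : ℝ) ≤ (Real.exp 1 * n / v) ^ v := hstep2
        _ ≤ (2 * Real.exp 1 * M) ^ v :=
            pow_le_pow_left₀ (div_nonneg (mul_nonneg (Real.exp_pos 1).le (Nat.cast_nonneg n))
              (Nat.cast_nonneg v)) hstep3 v
        _ ≤ (M ^ t / 2 ^ v) ^ 4 := hstep4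
        _ ≤ K ^ 4 :=
            pow_le_pow_left₀ (div_nonneg (pow_nonneg (by linarith : (0:ℝ) ≤ M) t)
              (pow_nonneg (by norm_num : (0:ℝ) ≤ 2) v)) hstep1 4
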